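/- Let C be a function clone on a set C and ξ : C → P a mapping to the clone of projections on {0,1}. If ξ preserves arities, preserves identities of height 1 (i.e., f(variables) ≈ g(variables)), and preserves composition with unary members both from inside and outside, then ξ is a clone homomorphism (i.e., it preserves projections and all compositions). -/

import Mathlib

/-- A function clone on `A` (operations of positive arity `n+1`),
containing all projections and closed under composition. -/
structure CloneOn (A : Type*) where
  ops : ∀ n : ℕ, Set ((Fin (n + 1) → A) → A)
  proj_mem : ∀ (n : ℕ) (i : Fin (n + 1)), (fun x => x i) ∈ ops n
  comp_mem : ∀ (n m : ℕ) (f : (Fin (n + 1) → A) → A)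
      (g : Fin (n + 1) → ((Fin (m + 1) → A) → A)),
      f ∈ ops n → (∀ i, g i ∈ ops m) →
      (fun x => f (fun i => g i x)) ∈ ops m

/-- `u : A → A` is a unary member of the clone. -/
def CloneOn.unaryMem {A : Type*} (C : CloneOn A) (u : A → A) : Prop :=
  (fun x : Fin 1 → A => u (x 0)) ∈ C.ops 0

theorem comp_main {A : Type*} (C : CloneOn A)
    (ξ : ∀ n : ℕ, ((Fin (n + 1) → A) → A) → Fin (n + 1))
    (h1 : ∀ (n m k : ℕ) (f : (Fin (n + 1) → A) → A) (g : (Fin (m + 1) → A) → A)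
      (σ : Fin (n + 1) → Fin (k + 1)) (τ : Fin (m + 1) → Fin (k + 1)),
      f ∈ C.ops n → g ∈ C.ops m →
      (∀ x : Fin (k + 1) → A, f (x ∘ σ) = g (x ∘ τ)) →
      σ (ξ n f) = τ (ξ m g))
    (halmost : ∀ (n m k : ℕ) (f : (Fin (n + 1) → A) → A) (g : (Fin (m + 1) → A) → A)
      (α γ : A → A) (β : Fin (n + 1) → A → A) (δ : Fin (m + 1) → A → A)
      (σ : Fin (n + 1) → Fin (k + 1)) (τ : Fin (m + 1) → Fin (k + 1)),
      f ∈ C.ops n → g ∈ C.ops m → C.unaryMem α → C.unaryMem γ →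
      (∀ i, C.unaryMem (β i)) → (∀ j, C.unaryMem (δ j)) →
      (∀ x : Fin (k + 1) → A,
        α (f (fun i => β i (x (σ i)))) = γ (g (fun j => δ j (x (τ j))))) →
      σ (ξ n f) = τ (ξ m g))
    (n m : ℕ) (f : (Fin (n + 1) → A) → A) (g : Fin (n + 1) → ((Fin (m + 1) → A) → A))
    (hf : f ∈ C.ops n) (hg : ∀ i, g i ∈ C.ops m)
    (k : ℕ) (e' : Fin (n + 1) × Fin (m + 1) ≃ Fin (k + 1)) :
    ξ m (fun x => f (fun i => g i x)) = ξ m (g (ξ n f)) := by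
  classical
  set j := ξ n f with hj
  -- identity is a unary member
  have hid : C.unaryMem (id : A → A) := C.proj_mem 0 0
  -- diagonal of a clone member is a unary member
  have hdiagm : ∀ (E : (Fin (m + 1) → A) → A), E ∈ C.ops m →
      C.unaryMem (fun b => E (fun _ => b)) := fun E hE =>
    C.comp_mem m 0 E (fun _ => fun x => x 0) hE (fun _ => C.proj_mem 0 0)
  have hdiagf : C.unaryMem (fun b => f (fun _ => b)) :=
    C.comp_mem n 0 f (fun _ => fun x => x 0) hf (fun _ => C.proj_mem 0 0)
  -- a clone member applied to a block of variables is a member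
  have hblock : ∀ (E : (Fin (m + 1) → A) → A), E ∈ C.ops m → ∀ (i : Fin (n + 1)),
      (fun x : Fin (k + 1) → A => E (fun l => x (e' (i, l)))) ∈ C.ops k := fun E hE i =>
    C.comp_mem m k E (fun l => fun x => x (e' (i, l))) hE (fun l => C.proj_mem k _)
  -- The base operation P
  set P : (Fin (k + 1) → A) → A := fun x => f (fun i =>
      if i = j then g j (fun l => x (e' (j, l))) else x (e' (i, 0))) with hPdef
  have hPmem : P ∈ C.ops k := by
    refine C.comp_mem n k f
      (fun i => fun x => if i = j then g j (fun l => x (e' (j, l))) else x (e' (i, 0))) hf ?_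
    intro i
    by_cases hi : i = j
    · simpa [hi] using hblock (g j) (hg j) j
    · simpa [hi] using C.proj_mem k (e' (i, 0))
  -- ξ P lies in block j
  have hP1 : (e'.symm (ξ k P)).1 = j := by
    have hcon := halmost k n k P f id id (fun _ => id)
      (fun i => if i = j then (fun b => g j (fun _ => b)) else id)
      (fun u => if (e'.symm u).1 = j then e' (j, 0) else u)
      (fun i => e' (i, 0))
      hPmem hf hid hid (fun _ => hid) ?_ ?_
    · by_cases hq : (e'.symm (ξ k P)).1 = j
      · exact hq
      · simp only [hq, if_neg, if_false] at hcon
        rw [hcon] at hq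
        simp at hq
        exact absurd hj.symm hq
    · intro i
      by_cases hi : i = j
      · simpa [hi] using hdiagm (g j) (hg j)
      · simpa [hi] using hid
    · intro x
      simp only [id_eq, hPdef]
      congr 1
      funext i
      by_cases hi : i = j
      · simp [hi]
      · simp [hi]
  -- substitution step: replacing variable (a,0) by E'(block a) preserves ξ
  have step : ∀ (F : (Fin (k + 1) → A) → A), F ∈ C.ops k →
      ∀ (a : Fin (n + 1)), a ≠ j →
      ∀ (E' : (Fin (m + 1) → A) → A), E' ∈ C.ops m →
      (e'.symm (ξ k F)).1 = j →
      ξ k (fun x => F (fun u => if u = e' (a, 0) then E' (fun l => x (e' (a, l))) else x u))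
        = ξ k F := by
    intro F hF a haj E' hE' hfst
    have hmem' : (fun x => F (fun u =>
        if u = e' (a, 0) then E' (fun l => x (e' (a, l))) else x u)) ∈ C.ops k := by
      refine C.comp_mem k k F
        (fun u => fun x => if u = e' (a, 0) then E' (fun l => x (e' (a, l))) else x u) hF ?_
      intro u
      by_cases hu : u = e' (a, 0)
      · simpa [hu] using hblock E' hE' a
      · simpa [hu] using C.proj_mem k u
    have hcon := halmost k k k
      (fun x => F (fun u => if u = e' (a, 0) then E' (fun l => x (e' (a, l))) else x u))
      F id id (fun _ => id)
      (fun u => if u = e' (a, 0) then (fun b => E' (fun _ => b)) else id)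
      (fun u => if (e'.symm u).1 = a then e' (a, 0) else u)
      (fun u => if (e'.symm u).1 = a then e' (a, 0) else u)
      hmem' hF hid hid (fun _ => hid) ?_ ?_
    · have hρF : (if (e'.symm (ξ k F)).1 = a then e' (a, 0) else ξ k F) = ξ k F := by
        rw [hfst]
        simp [Ne.symm haj]
      beta_reduce at hcon
      rw [hρF] at hcon
      by_cases hq : (e'.symm (ξ k (fun x => F (fun u =>
          if u = e' (a, 0) then E' (fun l => x (e' (a, l))) else x u)))).1 = a
      · rw [if_pos hq] at hcon
        exfalso
        rw [← hcon] at hfst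
        simp at hfst
        exact haj hfst
      · rwa [if_neg hq] at hcon
    · intro u
      by_cases hu : u = e' (a, 0)
      · simpa [hu] using hdiagm E' hE'
      · simpa [hu] using hid
    · intro x
      simp only [id_eq]
      congr 1
      funext u
      by_cases hu : u = e' (a, 0)
      · simp [hu]
      · simp [hu]
  -- the general family of operations
  set Fl : (Fin (n + 1) → ((Fin (m + 1) → A) → A)) → List (Fin (n + 1)) →
      ((Fin (k + 1) → A) → A) := fun E L => fun x => f (fun i =>
        if i = j then g j (fun l => x (e' (j, l)))
        else if i ∈ L then E i (fun l => x (e' (i, l))) else x (e' (i, 0))) with hFl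
  have memFl : ∀ (E : Fin (n + 1) → ((Fin (m + 1) → A) → A)), (∀ i, E i ∈ C.ops m) →
      ∀ L : List (Fin (n + 1)), Fl E L ∈ C.ops k := by
    intro E hE L
    rw [hFl]
    refine C.comp_mem n k f (fun i => fun x =>
      if i = j then g j (fun l => x (e' (j, l)))
      else if i ∈ L then E i (fun l => x (e' (i, l))) else x (e' (i, 0))) hf ?_
    intro i
    by_cases hi : i = j
    · simpa [hi] using hblock (g j) (hg j) j
    · by_cases hiL : i ∈ L
      · simpa [hi, hiL] using hblock (E i) (hE i) i
      · simpa [hi, hiL] using C.proj_mem k (e' (i, 0))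
  have key : ∀ (E : Fin (n + 1) → ((Fin (m + 1) → A) → A)), (∀ i, E i ∈ C.ops m) →
      ∀ L : List (Fin (n + 1)), ξ k (Fl E L) = ξ k P := by
    intro E hE L
    induction L with
    | nil =>
      have : Fl E [] = P := by
        rw [hFl, hPdef]
        funext x
        beta_reduce
        congr 1
      rw [this]
    | cons a L ih =>
      by_cases haj : a = j
      · have heq : Fl E (a :: L) = Fl E L := by
          rw [hFl]
          funext x
          beta_reduce
          congr 1
          funext i
          by_cases hi : i = j
          · simp [hi]
          · have : i ≠ a := fun h => hi (h.trans haj)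
            simp [hi, List.mem_cons, this]
        rw [heq]; exact ih
      · by_cases haL : a ∈ L
        · have heq : Fl E (a :: L) = Fl E L := by
            rw [hFl]
            funext x
            beta_reduce
            congr 1
            funext i
            by_cases hi : i = j
            · simp [hi]
            · by_cases hia : i = a
              · simp [hi, hia, List.mem_cons, haL]
              · simp [hi, List.mem_cons, hia]
          rw [heq]; exact ih
        · have heq : Fl E (a :: L) = fun x => (Fl E L) (fun u =>
              if u = e' (a, 0) then E a (fun l => x (e' (a, l))) else x u) := by
            rw [hFl]
            funext x
            beta_reduce
            congr 1
            funext i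
            by_cases hi : i = j
            · simp [hi, EmbeddingLike.apply_eq_iff_eq, Prod.ext_iff, Ne.symm haj]
            · by_cases hia : i = a
              · simp [hi, hia, haj, haL, EmbeddingLike.apply_eq_iff_eq, Prod.ext_iff]
              · by_cases hiL : i ∈ L
                · simp [hi, hia, hiL, List.mem_cons, EmbeddingLike.apply_eq_iff_eq,
                    Prod.ext_iff]
                · simp [hi, hia, hiL, List.mem_cons, EmbeddingLike.apply_eq_iff_eq,
                    Prod.ext_iff]
          rw [heq]
          have hfst : (e'.symm (ξ k (Fl E L))).1 = j := by rw [ih]; exact hP1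
          have := step (Fl E L) (memFl E hE L) a haj (E a) (hE a) hfst
          rw [this]
          exact ih
  have hS := key (fun _ => g j) (fun _ => hg j) (List.finRange (n + 1))
  have hR := key g hg (List.finRange (n + 1))
  have hQmem : (fun x : Fin (m + 1) → A => f (fun _ => g j x)) ∈ C.ops m :=
    C.comp_mem n m f (fun _ => g j) hf (fun _ => hg j)
  have hHmem : (fun x : Fin (m + 1) → A => f (fun i => g i x)) ∈ C.ops m :=
    C.comp_mem n m f g hf hg
  have hSdiag := h1 k m m (Fl (fun _ => g j) (List.finRange (n + 1)))
      (fun x : Fin (m + 1) → A => f (fun _ => g j x))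
      (fun u => (e'.symm u).2) id
      (memFl (fun _ => g j) (fun _ => hg j) (List.finRange (n + 1))) hQmem
      (by
        intro x
        rw [hFl]
        beta_reduce
        congr 1
        funext i
        by_cases hi : i = j
        · simp [hi, Function.comp]
        · simp [hi, Function.comp, List.mem_finRange])
  have hRdiag := h1 k m m (Fl g (List.finRange (n + 1)))
      (fun x : Fin (m + 1) → A => f (fun i => g i x))
      (fun u => (e'.symm u).2) id
      (memFl g hg (List.finRange (n + 1))) hHmem
      (by
        intro x
        rw [hFl]
        beta_reduce
        congr 1
        funext i
        by_cases hi : i = j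
        · simp [hi, Function.comp]
        · simp [hi, Function.comp, List.mem_finRange])
  have hQg := halmost m m m (fun x : Fin (m + 1) → A => f (fun _ => g j x)) (g j)
      id (fun b => f (fun _ => b)) (fun _ => id) (fun _ => id) id id
      hQmem (hg j) hid hdiagf (fun _ => hid) (fun _ => hid) (fun x => rfl)
  rw [hS] at hSdiag
  rw [hR] at hRdiag
  beta_reduce at hSdiag hRdiag
  simp only [id_eq] at hSdiag hRdiag hQg
  rw [← hRdiag, hSdiag, hQg]





/-- An almost clone homomorphism from a function clone to the projection clone
(encoded by the index of the target projection) is a clone homomorphism. -/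
theorem stmt_2 {A : Type*} (C : CloneOn A)
    (ξ : ∀ n : ℕ, ((Fin (n + 1) → A) → A) → Fin (n + 1))
    -- ξ preserves height-1 identities
    (h1 : ∀ (n m k : ℕ) (f : (Fin (n + 1) → A) → A) (g : (Fin (m + 1) → A) → A)
      (σ : Fin (n + 1) → Fin (k + 1)) (τ : Fin (m + 1) → Fin (k + 1)),
      f ∈ C.ops n → g ∈ C.ops m →
      (∀ x : Fin (k + 1) → A, f (x ∘ σ) = g (x ∘ τ)) →
      σ (ξ n f) = τ (ξ m g))
    -- ξ preserves composition with unary members, both from inside and outside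
    (halmost : ∀ (n m k : ℕ) (f : (Fin (n + 1) → A) → A) (g : (Fin (m + 1) → A) → A)
      (α γ : A → A) (β : Fin (n + 1) → A → A) (δ : Fin (m + 1) → A → A)
      (σ : Fin (n + 1) → Fin (k + 1)) (τ : Fin (m + 1) → Fin (k + 1)),
      f ∈ C.ops n → g ∈ C.ops m → C.unaryMem α → C.unaryMem γ →
      (∀ i, C.unaryMem (β i)) → (∀ j, C.unaryMem (δ j)) →
      (∀ x : Fin (k + 1) → A,
        α (f (fun i => β i (x (σ i)))) = γ (g (fun j => δ j (x (τ j))))) →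
      σ (ξ n f) = τ (ξ m g)) :
    -- conclusion: ξ is a clone homomorphism
    (∀ (n : ℕ) (i : Fin (n + 1)), ξ n (fun x => x i) = i) ∧
    (∀ (n m : ℕ) (f : (Fin (n + 1) → A) → A)
      (g : Fin (n + 1) → ((Fin (m + 1) → A) → A)),
      f ∈ C.ops n → (∀ i, g i ∈ C.ops m) →
      ξ m (fun x => f (fun i => g i x)) = ξ m (g (ξ n f))) := by
  constructor
  · intro n i
    have := h1 n 0 n (fun x => x i) (fun x => x 0) id (fun _ => i)
      (C.proj_mem n i) (C.proj_mem 0 0) (fun x => rfl)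
    simpa using this
  · intro n m f g hf hg
    exact comp_main C ξ h1 halmost n m f g hf hg (n * m + n + m)
      (finProdFinEquiv.trans (finCongr (by ring)))
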